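/- Let L(λ) be the 2×2 traceless matrix with entries L_{11} = v(λ), L_{12} = u(λ), L_{21} = w(λ), L_{22} = −v(λ), where u(λ) = Π_k (λ−λ_k), v is the interpolation polynomial with v(λ_i) = g(λ_i)μ_i, and w(λ) = −2(g²(λ)/f(λ))[F(λ, v(λ)/g(λ))/u(λ)]_+ with F(x,y) = ½ f(x) y² − σ(x). Then det[L(λ) − g(λ)μ I] = −2(g²(λ)/f(λ)) ( σ(λ) + Σ_{j=1}^n H_j λ^{n−j} − ½ f(λ) μ² ), where H_j are the Stäckel Hamiltonians defined by the n equations σ(λ_i) + Σ_j H_j λ_i^{n−j} = ½ f(λ_i) μ_i² for i = 1,…,n. -/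

import Mathlib

open scoped BigOperators

/-- the Lax matrix `L(λ) = [[v, u], [w, -v]]`, with
`u(λ) = ∏(λ-λ_k)`, `v` the interpolation polynomial with `v(λ_i) = g(λ_i)μ_i`,
and `w(λ) = -2 (g²(λ)/f(λ)) [F(λ, v(λ)/g(λ))/u(λ)]_+` where
`F(x,y) = ½ f(x) y² - σ(x)` (the Laurent-polynomial part `Wp` being
characterized by `F(x, v/g) = Wp(x) u(x) + Rm(x)` with `Rm` a polynomial of
degree `< n` and `Wp` a Laurent polynomial `q(x)/x^N`), reconstructs the
separation curve:
`det[L(λ) - g(λ)μ I] = -2 (g²(λ)/f(λ)) (σ(λ) + ∑_j H_j λ^{n-j} - ½ f(λ)μ²)`,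
where the `H_j` are the Stäckel Hamiltonians solving
`σ(λ_i) + ∑_j H_j λ_i^{n-j} = ½ f(λ_i) μ_i²`. -/
theorem lax_matrix_reconstructs_separation_curve
    (n : ℕ) (hn : 0 < n)
    (l μ : Fin n → ℝ) (hdist : Function.Injective l) (hlne : ∀ i, l i ≠ 0)
    (σ f g : ℝ → ℝ) (hf : ∀ x, f x ≠ 0) (hg : ∀ x, g x ≠ 0)
    (H : Fin n → ℝ)
    (hH : ∀ i : Fin n, σ (l i) + ∑ j : Fin n, H j * (l i) ^ (n - 1 - (j : ℕ))
      = (1 / 2) * f (l i) * (μ i) ^ 2)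
    (u v w Wp : ℝ → ℝ)
    (hu : ∀ x, u x = ∏ k : Fin n, (x - l k))
    (hv : ∀ x, v x = ∑ i : Fin n, g (l i) * μ i *
      ∏ k ∈ Finset.univ.erase i, ((x - l k) / (l i - l k)))
    -- [F(λ, v/g)/u]₊ = Wp, with remainder Rm of degree < n:
    (Rm : Polynomial ℝ) (hRm : Rm.degree < n)
    (hdiv : ∀ x : ℝ, x ≠ 0 →
      (1 / 2) * f x * (v x / g x) ^ 2 - σ x = Wp x * u x + Rm.eval x)
    -- Wp is a Laurent polynomial:
    (q : Polynomial ℝ) (N : ℕ) (hWp : ∀ x : ℝ, x ≠ 0 → Wp x = q.eval x / x ^ N)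
    (hw : ∀ x, w x = -2 * (g x) ^ 2 / f x * Wp x) :
    ∀ (x mu : ℝ), x ≠ 0 →
      Matrix.det !![v x - g x * mu, u x; w x, -(v x) - g x * mu]
        = -2 * (g x) ^ 2 / f x *
            (σ x + ∑ j : Fin n, H j * x ^ (n - 1 - (j : ℕ))
              - (1 / 2) * f x * mu ^ 2) := by
  -- v interpolates: v (l i) = g (l i) * μ i
  have hvl : ∀ i : Fin n, v (l i) = g (l i) * μ i := by
    intro i
    rw [hv]
    rw [Finset.sum_eq_single i]
    · have : ∀ k ∈ Finset.univ.erase i, (l i - l k) / (l i - l k) = 1 := by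
        intro k hk
        have hki : k ≠ i := Finset.ne_of_mem_erase hk
        have : l i - l k ≠ 0 := sub_ne_zero.mpr (fun h => hki (hdist h.symm))
        field_simp
      rw [Finset.prod_congr rfl this, Finset.prod_const_one, mul_one]
    · intro j _ hji
      have hij : i ∈ Finset.univ.erase j := Finset.mem_erase.mpr ⟨fun h => hji h.symm, Finset.mem_univ i⟩
      rw [Finset.prod_eq_zero hij (by simp), mul_zero]
    · intro h; exact absurd (Finset.mem_univ i) h
  -- u vanishes at l i
  have hul : ∀ i : Fin n, u (l i) = 0 := by
    intro i
    rw [hu]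
    exact Finset.prod_eq_zero (Finset.mem_univ i) (by ring)
  -- the polynomial Q with Q.eval x = ∑ H j x^(n-1-j)
  set Q : Polynomial ℝ := ∑ j : Fin n, Polynomial.C (H j) * Polynomial.X ^ (n - 1 - (j : ℕ)) with hQ
  have hQeval : ∀ x : ℝ, Q.eval x = ∑ j : Fin n, H j * x ^ (n - 1 - (j : ℕ)) := by
    intro x; simp [hQ, Polynomial.eval_finset_sum]
  have hQdeg : Q.degree < n := by
    apply lt_of_le_of_lt (Polynomial.degree_sum_le _ _)
    apply Finset.sup_lt_iff (by exact_mod_cast WithBot.bot_lt_coe n) |>.mpr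
    intro j _
    apply lt_of_le_of_lt (Polynomial.degree_C_mul_X_pow_le _ _)
    exact_mod_cast Nat.lt_of_le_of_lt (Nat.sub_le _ _) (Nat.sub_lt hn one_pos)
  -- Rm = Q since they agree at the n distinct points l i
  have hRmQ : Rm = Q := by
    have hzero : ∀ i : Fin n, (Rm - Q).eval (l i) = 0 := by
      intro i
      have h1 := hdiv (l i) (hlne i)
      rw [hul i, hvl i, mul_zero, zero_add] at h1
      have h2 : (g (l i) * μ i) / g (l i) = μ i :=
        mul_div_cancel_left₀ _ (hg (l i))
      rw [h2] at h1
      have h3 := hH i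
      rw [Polynomial.eval_sub, hQeval]
      linarith
    have hdeg : (Rm - Q).natDegree < Fintype.card (Fin n) := by
      rw [Fintype.card_fin]
      by_cases h0 : Rm - Q = 0
      · rw [h0]; simpa using hn
      · have : (Rm - Q).degree < n :=
          lt_of_le_of_lt (Polynomial.degree_sub_le _ _) (max_lt hRm hQdeg)
        exact (Polynomial.natDegree_lt_iff_degree_lt h0).mpr this
    have := Polynomial.eq_zero_of_natDegree_lt_card_of_eval_eq_zero (Rm - Q) hdist
      hzero hdeg
    exact sub_eq_zero.mp this
  intro x mu hx
  have key := hdiv x hx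
  rw [hRmQ, hQeval] at key
  have hfx := hf x
  have hgx := hg x
  rw [Matrix.det_fin_two_of, hw x]
  field_simp at key ⊢
  linear_combination (-1) * key
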